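/- For all n ∈ ℕ and d ≥ 1, the rational function S_{n,d} = Σ_{k=0}^n (U_{d−1} ∘ T_{(d+1)^k}) · Π_{j=0}^k 1/(U_d ∘ T_{(d+1)^j}) satisfies S_{n,d}² − 2x·S_{n,d} + 1 = (Π_{j=0}^n 1/(U_d ∘ T_{(d+1)^j}))². -/

import Mathlib

open Polynomial Polynomial.Chebyshev Finset

noncomputable def toRat (p : Polynomial ℚ) : RatFunc ℚ := algebraMap (Polynomial ℚ) (RatFunc ℚ) p

noncomputable def Sfrac (n d : ℕ) : RatFunc ℚ :=
  ∑ k ∈ Finset.range (n + 1),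
    toRat ((U ℚ ((d : ℤ) - 1)).comp (T ℚ (((d + 1) ^ k : ℕ) : ℤ))) *
      ∏ j ∈ Finset.range (k + 1), (toRat ((U ℚ (d : ℤ)).comp (T ℚ (((d + 1) ^ j : ℕ) : ℤ))))⁻¹

lemma Teval1 (n : ℕ) : (T ℚ (n:ℤ)).eval 1 = 1 := by
  induction n using Nat.twoStepInduction with
  | zero => simp [T_zero]
  | one => simp [T_one]
  | more n ih1 ih2 =>
    have h : ((n+2:ℕ):ℤ) = ((n:ℤ)+2) := by push_cast; ring
    have h1 : ((n+1:ℕ):ℤ) = ((n:ℤ)+1) := by push_cast; ring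
    rw [h, T_add_two]
    rw [h1] at ih2
    simp [ih1, ih2]; norm_num

lemma Ueval1 (n : ℕ) : (U ℚ (n:ℤ)).eval 1 = n+1 := by
  induction n using Nat.twoStepInduction with
  | zero => simp [U_zero]
  | one => simp [U_one]; norm_num
  | more n ih1 ih2 =>
    have h : ((n+2:ℕ):ℤ) = ((n:ℤ)+2) := by push_cast; ring
    have h1 : ((n+1:ℕ):ℤ) = ((n:ℤ)+1) := by push_cast; ring
    rw [h, U_add_two]
    rw [h1] at ih2
    simp [ih1, ih2]
    ring

lemma mulU (m : ℕ) (k : ℤ) :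
    2 * T ℚ (m:ℤ) * U ℚ k = U ℚ (k + m) + U ℚ (k - m) := by
  induction m using Nat.twoStepInduction generalizing k with
  | zero => simp [T_zero]; ring
  | one =>
    have h := U_add_one ℚ k
    have h2 : k + (1:ℕ) = k + 1 := by push_cast; ring
    have h3 : k - (1:ℕ) = k - 1 := by push_cast; ring
    rw [h2, h3]
    simp only [Nat.cast_one, T_one]
    linear_combination -h
  | more m ih1 ih2 =>
    have hA := T_add_two ℚ (m:ℤ)
    have hB : 2 * T ℚ ((m:ℤ)+1) * U ℚ k = U ℚ (k + ↑m + 1) + U ℚ (k - ↑m - 1) := by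
      have h := ih2 k
      rw [show ((m+1:ℕ):ℤ) = (m:ℤ)+1 by push_cast; ring] at h
      rw [show k + ((m:ℤ)+1) = k + ↑m + 1 by ring, show k - ((m:ℤ)+1) = k - ↑m - 1 by ring] at h
      exact h
    have hC := ih1 k
    have hD := U_add_two ℚ (k + (m:ℤ))
    have hE := U_sub_two ℚ (k - (m:ℤ))
    rw [show ((m+2:ℕ):ℤ) = (m:ℤ)+2 by push_cast; ring]
    rw [show k + ((m:ℤ)+2) = k + ↑m + 2 by ring, show k - ((m:ℤ)+2) = k - ↑m - 2 by ring]
    linear_combination 2 * U ℚ k * hA + 2 * X * hB - hC - hD - hE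
lemma pell (m : ℕ) : (T ℚ (m:ℤ))^2 + (1 - X^2) * (U ℚ ((m:ℤ)-1))^2 = 1 := by
  induction m with
  | zero => simp [T_zero, U_neg_one]
  | succ m ih =>
    have hA : T ℚ ((m:ℤ)+1) = X * T ℚ (m:ℤ) - (1 - X^2) * U ℚ ((m:ℤ)-1) := by
      have := T_eq_X_mul_T_sub_pol_U ℚ ((m:ℤ)-1)
      rw [show (m:ℤ)-1+2 = (m:ℤ)+1 by ring, show (m:ℤ)-1+1 = (m:ℤ) by ring] at this
      exact this
    have hB : U ℚ (m:ℤ) = X * U ℚ ((m:ℤ)-1) + T ℚ (m:ℤ) := by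
      have := U_eq_X_mul_U_add_T ℚ ((m:ℤ)-1)
      rw [show (m:ℤ)-1+1 = (m:ℤ) by ring] at this
      exact this
    rw [show ((m+1:ℕ):ℤ) = (m:ℤ)+1 by push_cast; ring,
        show ((m:ℤ)+1)-1 = (m:ℤ) by ring, hA, hB]
    linear_combination ih

-- X * U_k - T_{k+1} = U_{k-1}
lemma XU_sub_T (k : ℤ) : X * U ℚ k - T ℚ (k+1) = U ℚ (k-1) := by
  have h1 := T_eq_U_sub_X_mul_U ℚ (k+1)
  rw [show k+1-1 = k by ring] at h1
  have h2 := U_add_one ℚ k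
  linear_combination -h1 - h2

-- composed version
lemma key_comp (d : ℕ) (m : ℤ) :
    T ℚ m * (U ℚ (d:ℤ)).comp (T ℚ m) - T ℚ (((d:ℤ)+1)*m) = (U ℚ ((d:ℤ)-1)).comp (T ℚ m) := by
  have h := congrArg (fun p => p.comp (T ℚ m)) (XU_sub_T ((d:ℤ)))
  simp only [sub_comp, mul_comp, X_comp] at h
  rw [← T_mul] at h
  exact h

-- (U_d ∘ T_m) * U_{m-1} = U_{(d+1)m - 1}
lemma compMul (d : ℕ) (m : ℕ) :
    (U ℚ (d:ℤ)).comp (T ℚ (m:ℤ)) * U ℚ ((m:ℤ)-1) = U ℚ (((d:ℤ)+1)*m - 1) := by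
  induction d using Nat.twoStepInduction with
  | zero =>
    simp only [Nat.cast_zero, U_zero, one_comp, one_mul]
    rw [show ((0:ℤ)+1)*(m:ℤ)-1 = (m:ℤ)-1 by ring]
  | one =>
    simp only [Nat.cast_one, U_one, mul_comp, X_comp, ofNat_comp]
    have h := mulU m ((m:ℤ)-1)
    rw [show (m:ℤ)-1+(m:ℤ) = ((1:ℤ)+1)*m - 1 by ring,
        show (m:ℤ)-1-(m:ℤ) = (-1:ℤ) by ring, U_neg_one, add_zero] at h
    exact h
  | more d ih1 ih2 =>
    have hrec := U_add_two ℚ (d:ℤ)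
    have h := congrArg (fun p => p.comp (T ℚ (m:ℤ)) * U ℚ ((m:ℤ)-1)) hrec
    simp only [sub_comp, mul_comp, X_comp, ofNat_comp] at h
    have h2 : (U ℚ ((d:ℤ)+1)).comp (T ℚ (m:ℤ)) * U ℚ ((m:ℤ)-1) = U ℚ (((d:ℤ)+2)*m - 1) := by
      have h' := ih2
      rw [show ((d+1:ℕ):ℤ) = (d:ℤ)+1 by push_cast; ring,
          show ((d:ℤ)+1+1)*(m:ℤ)-1 = ((d:ℤ)+2)*m - 1 by ring] at h'
      exact h'
    have hm := mulU m (((d:ℤ)+2)*m - 1)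
    rw [show ((d:ℤ)+2)*(m:ℤ)-1+(m:ℤ) = ((d:ℤ)+3)*m - 1 by ring,
        show ((d:ℤ)+2)*(m:ℤ)-1-(m:ℤ) = ((d:ℤ)+1)*m - 1 by ring] at hm
    rw [show ((d+2:ℕ):ℤ) = (d:ℤ)+2 by push_cast; ring,
        show ((d:ℤ)+2+1)*(m:ℤ) - 1 = ((d:ℤ)+3)*m - 1 by ring]
    linear_combination h + 2 * T ℚ (m:ℤ) * h2 - ih1 + hm

lemma prodU (d n : ℕ) :
    ∏ j ∈ range (n+1), (U ℚ (d:ℤ)).comp (T ℚ (((d+1)^j : ℕ):ℤ))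
      = U ℚ ((((d+1)^(n+1) : ℕ):ℤ) - 1) := by
  induction n with
  | zero =>
    simp only [zero_add, prod_range_one, pow_zero, Nat.cast_one, T_one, comp_X]
    rw [show (((d+1)^1 : ℕ):ℤ) - 1 = (d:ℤ) by push_cast; ring]
  | succ n ih =>
    rw [prod_range_succ, ih, mul_comm, compMul d ((d+1)^(n+1))]
    rw [show (((d+1)^(n+1+1) : ℕ):ℤ) - 1 = ((d:ℤ)+1)*(((d+1)^(n+1):ℕ):ℤ) - 1 by push_cast; ring]

lemma UcompT_ne (d m : ℕ) : (U ℚ (d:ℤ)).comp (T ℚ (m:ℤ)) ≠ 0 := by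
  intro h
  have h1 : ((U ℚ (d:ℤ)).comp (T ℚ (m:ℤ))).eval 1 = (d:ℚ)+1 := by
    rw [eval_comp, Teval1, Ueval1]
  rw [h, eval_zero] at h1
  norm_cast at h1

lemma U_ne (m : ℕ) : U ℚ (m:ℤ) ≠ 0 := by
  intro h
  have h1 := Ueval1 m
  rw [h, eval_zero] at h1
  norm_cast at h1


lemma toRat_ne (p : Polynomial ℚ) (hp : p ≠ 0) : toRat p ≠ 0 := by
  simpa [toRat] using (map_ne_zero_iff _ (IsFractionRing.injective (Polynomial ℚ) (RatFunc ℚ))).mpr hp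

lemma closed (n d : ℕ) :
    Sfrac n d = toRat X - toRat (T ℚ (((d+1)^(n+1) : ℕ):ℤ)) *
      ∏ j ∈ Finset.range (n+1), (toRat ((U ℚ (d:ℤ)).comp (T ℚ (((d+1)^j : ℕ):ℤ))))⁻¹ := by
  induction n with
  | zero =>
    simp only [Sfrac, zero_add, sum_range_one, prod_range_one, pow_zero, Nat.cast_one, T_one, comp_X]
    have hu : toRat (U ℚ (d:ℤ)) ≠ 0 := by
      have := UcompT_ne d 1
      rw [Nat.cast_one, T_one, comp_X] at this
      exact toRat_ne _ this
    have hkey : toRat X * toRat (U ℚ (d:ℤ)) - toRat (T ℚ ((d:ℤ)+1)) = toRat (U ℚ ((d:ℤ)-1)) := by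
      have := congrArg toRat (XU_sub_T (d:ℤ))
      simpa [toRat, map_sub, map_mul] using this
    rw [show (((d+1)^1 : ℕ):ℤ) = (d:ℤ)+1 by push_cast; ring]
    field_simp
    linear_combination -hkey
  | succ n ih =>
    have hM : (((d+1)^(n+1+1) : ℕ):ℤ) = ((d:ℤ)+1) * (((d+1)^(n+1) : ℕ):ℤ) := by push_cast; ring
    set M : ℕ := (d+1)^(n+1) with hMdef
    have hu : toRat ((U ℚ (d:ℤ)).comp (T ℚ (M:ℤ))) ≠ 0 := toRat_ne _ (UcompT_ne d M)
    have hkey : toRat (T ℚ (M:ℤ)) * toRat ((U ℚ (d:ℤ)).comp (T ℚ (M:ℤ)))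
        - toRat (T ℚ (((d:ℤ)+1) * (M:ℤ))) = toRat ((U ℚ ((d:ℤ)-1)).comp (T ℚ (M:ℤ))) := by
      have := congrArg toRat (key_comp d (M:ℤ))
      simpa [toRat, map_sub, map_mul] using this
    have hsum : Sfrac (n+1) d = Sfrac n d
        + toRat ((U ℚ ((d:ℤ)-1)).comp (T ℚ (M:ℤ)))
          * ∏ j ∈ Finset.range (n+1+1), (toRat ((U ℚ (d:ℤ)).comp (T ℚ (((d+1)^j : ℕ):ℤ))))⁻¹ := by
      rw [Sfrac, Sfrac, sum_range_succ]
    rw [hsum, ih, hM, prod_range_succ (fun j => (toRat ((U ℚ (d:ℤ)).comp (T ℚ (((d+1)^j : ℕ):ℤ))))⁻¹) (n+1)]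
    have huu : toRat ((U ℚ (d:ℤ)).comp (T ℚ (M:ℤ))) * (toRat ((U ℚ (d:ℤ)).comp (T ℚ (M:ℤ))))⁻¹ = 1 :=
      mul_inv_cancel₀ hu
    set P := ∏ j ∈ Finset.range (n+1), (toRat ((U ℚ (d:ℤ)).comp (T ℚ (((d+1)^j : ℕ):ℤ))))⁻¹
    linear_combination (toRat (T ℚ (M:ℤ)) * P) * huu
      - P * (toRat ((U ℚ (d:ℤ)).comp (T ℚ (M:ℤ))))⁻¹ * hkey

theorem Sfrac_quadratic (n d : ℕ) (hd : 1 ≤ d) :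
    Sfrac n d ^ 2 - 2 * toRat X * Sfrac n d + 1 =
      (∏ j ∈ Finset.range (n + 1), (toRat ((U ℚ (d : ℤ)).comp (T ℚ (((d + 1) ^ j : ℕ) : ℤ))))⁻¹) ^ 2 := by
  have hM1 : 1 ≤ (d+1)^(n+1) := Nat.one_le_pow _ _ (Nat.succ_pos d)
  have hP : ∏ j ∈ Finset.range (n+1), (toRat ((U ℚ (d:ℤ)).comp (T ℚ (((d+1)^j : ℕ):ℤ))))⁻¹
      = (toRat (U ℚ ((((d+1)^(n+1) : ℕ):ℤ) - 1)))⁻¹ := by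
    rw [prod_inv_distrib]
    congr 1
    simp only [toRat]
    rw [← map_prod, prodU d n]
  have hcast : ((((d+1)^(n+1) : ℕ):ℤ) - 1) = ((((d+1)^(n+1) - 1 : ℕ)):ℤ) := by
    push_cast [hM1]; ring
  have hw : toRat (U ℚ ((((d+1)^(n+1) : ℕ):ℤ) - 1)) ≠ 0 := by
    rw [hcast]; exact toRat_ne _ (U_ne _)
  have hpell : toRat (T ℚ (((d+1)^(n+1) : ℕ):ℤ))^2
      + (1 - toRat X^2) * toRat (U ℚ ((((d+1)^(n+1) : ℕ):ℤ) - 1))^2 = 1 := by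
    have := congrArg toRat (pell ((d+1)^(n+1)))
    simpa [toRat, map_add, map_mul, map_sub, map_pow, map_one] using this
  rw [closed, hP]
  set t := toRat (T ℚ (((d+1)^(n+1) : ℕ):ℤ))
  set w := toRat (U ℚ ((((d+1)^(n+1) : ℕ):ℤ) - 1))
  field_simp
  linear_combination hpell
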